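/- arXiv:2208.08421 — 5 statements merged into one kernel-verified Lean document; each statement's English description precedes it below -/
import Mathlib

section
/- For any nonnegative integers k and n with n ≤ k, the sum S₁ = Σ_{j=0}^{k} (-1)^j (2k-j)! / ((2k-j-n)! · j! · (k-j)!) equals 0 if n < k, and equals 1 if n = k. -/
open Finset

lemma choose_swap (k j l : ℕ) : k.choose j * (k - j).choose l = k.choose l * (k - l).choose j := by
  rcases le_or_gt (j + l) k with h | h
  · have hj : j ≤ k := le_trans (Nat.le_add_right _ _) h
    have hl : l ≤ k := le_trans (Nat.le_add_left _ _) h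
    have h1 := Nat.choose_mul (n := k) (Nat.le_add_right j l)
    have h2 := Nat.choose_mul (n := k) (Nat.le_add_left l j)
    rw [Nat.add_sub_cancel_left] at h1
    rw [Nat.add_sub_cancel_right] at h2
    rw [← h1, ← h2, Nat.choose_symm_add]
  · rcases le_or_gt j k with hj | hj
    · rcases le_or_gt l k with hl | hl
      · have : k - j < l := by omega
        have : (k - j).choose l = 0 := Nat.choose_eq_zero_of_lt this
        have h2 : (k - l).choose j = 0 := Nat.choose_eq_zero_of_lt (by omega)
        rw [this, h2, Nat.mul_zero, Nat.mul_zero]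
      · rw [Nat.choose_eq_zero_of_lt hl, Nat.zero_mul]
        have : k - j < l := by omega
        rw [Nat.choose_eq_zero_of_lt this, Nat.mul_zero]
    · rw [Nat.choose_eq_zero_of_lt hj, Nat.zero_mul]
      have : k - l < j := by omega
      rw [Nat.choose_eq_zero_of_lt this, Nat.mul_zero]

lemma alt_sum_ext (m k : ℕ) (hmk : m ≤ k) :
    (∑ j ∈ range (k + 1), ((-1 : ℝ) ^ j * m.choose j)) = if m = 0 then 1 else 0 := by
  have h1 : (∑ j ∈ range (m + 1), ((-1 : ℝ) ^ j * m.choose j)) = if m = 0 then 1 else 0 := by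
    have := Int.alternating_sum_range_choose (n := m)
    have := congrArg (fun z : ℤ => (z : ℝ)) this
    push_cast at this
    simpa using this
  rw [← h1]
  symm
  apply Finset.sum_subset
  · exact Finset.range_subset_range.2 (by omega)
  · intro x hx hx'
    simp only [Finset.mem_range] at hx hx'
    rw [Nat.choose_eq_zero_of_lt (by omega)]
    simp

lemma key (k n : ℕ) (hnk : n ≤ k) :
    (∑ j ∈ range (k + 1), (-1 : ℝ) ^ j * k.choose j * (2 * k - j).choose n)
      = if n = k then 1 else 0 := by
  have step1 : ∀ j ∈ range (k + 1),
      (-1 : ℝ) ^ j * k.choose j * (2 * k - j).choose n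
        = ∑ p ∈ Finset.HasAntidiagonal.antidiagonal n,
            (-1 : ℝ) ^ j * ((k.choose p.1 : ℝ) * (k.choose p.2 * (k - p.2).choose j)) := by
    intro j hj
    simp only [Finset.mem_range] at hj
    have h2k : 2 * k - j = k + (k - j) := by omega
    rw [h2k, Nat.add_choose_eq]
    push_cast
    rw [Finset.mul_sum]
    apply Finset.sum_congr rfl
    intro p hp
    have hc : (k.choose j : ℝ) * (k - j).choose p.2 = (k.choose p.2 : ℝ) * (k - p.2).choose j := by
      exact_mod_cast congrArg (fun m : ℕ => (m : ℝ)) (choose_swap k j p.2)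
    linear_combination ((-1 : ℝ) ^ j * k.choose p.1) * hc
  rw [Finset.sum_congr rfl step1, Finset.sum_comm]
  have step2 : ∀ p ∈ Finset.HasAntidiagonal.antidiagonal n,
      (∑ j ∈ range (k + 1), (-1 : ℝ) ^ j * ((k.choose p.1 : ℝ) * (k.choose p.2 * (k - p.2).choose j)))
        = (k.choose p.1 : ℝ) * k.choose p.2 * (if k - p.2 = 0 then 1 else 0) := by
    intro p hp
    have hsum := alt_sum_ext (k - p.2) k (Nat.sub_le _ _)
    calc (∑ j ∈ range (k + 1), (-1 : ℝ) ^ j * ((k.choose p.1 : ℝ) * (k.choose p.2 * (k - p.2).choose j)))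
        = (k.choose p.1 : ℝ) * k.choose p.2 * ∑ j ∈ range (k + 1), (-1 : ℝ) ^ j * (k - p.2).choose j := by
          rw [Finset.mul_sum]; apply Finset.sum_congr rfl; intro j _; ring
      _ = _ := by rw [hsum]
  rw [Finset.sum_congr rfl step2]
  rcases eq_or_lt_of_le hnk with h | h
  · subst h
    rw [if_pos rfl]
    rw [Finset.sum_eq_single (0, n)]
    · simp
    · intro p hp hne
      simp only [Finset.HasAntidiagonal.mem_antidiagonal] at hp
      have hlt : p.2 < n := by
        by_contra hcon
        push_neg at hcon
        have hb : p.2 = n := le_antisymm (by omega) hcon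
        have ha : p.1 = 0 := by omega
        exact hne (Prod.ext ha hb)
      rw [if_neg (by omega)]
      ring
    · intro h
      exact absurd (by simp) h
  · rw [if_neg (by omega)]
    apply Finset.sum_eq_zero
    intro p hp
    simp only [Finset.HasAntidiagonal.mem_antidiagonal] at hp
    rw [if_neg (by omega)]
    ring

theorem stmt0 (k n : ℕ) (hnk : n ≤ k) :
    ∑ j ∈ Finset.range (k + 1),
      (-1 : ℝ) ^ j * (Nat.factorial (2 * k - j)) /
        ((Nat.factorial (2 * k - j - n)) * (Nat.factorial j) * (Nat.factorial (k - j)))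
      = if n < k then 0 else 1 := by
  have hterm : ∀ j ∈ Finset.range (k + 1),
      (-1 : ℝ) ^ j * (Nat.factorial (2 * k - j)) /
        ((Nat.factorial (2 * k - j - n)) * (Nat.factorial j) * (Nat.factorial (k - j)))
      = ((n.factorial : ℝ) / k.factorial) * ((-1 : ℝ) ^ j * k.choose j * (2 * k - j).choose n) := by
    intro j hj
    simp only [Finset.mem_range] at hj
    have hjk : j ≤ k := by omega
    have hn2k : n ≤ 2 * k - j := by omega
    have e1 : (2 * k - j).choose n * n.factorial * (2 * k - j - n).factorial = (2 * k - j).factorial :=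
      Nat.choose_mul_factorial_mul_factorial hn2k
    have e2 : k.choose j * j.factorial * (k - j).factorial = k.factorial :=
      Nat.choose_mul_factorial_mul_factorial hjk
    have f1 : ((2 * k - j).factorial : ℝ) = (2 * k - j).choose n * n.factorial * (2 * k - j - n).factorial := by
      exact_mod_cast e1.symm
    have f2 : (k.factorial : ℝ) = k.choose j * j.factorial * (k - j).factorial := by
      exact_mod_cast e2.symm
    have h1 : ((2 * k - j - n).factorial : ℝ) ≠ 0 := Nat.cast_ne_zero.2 (Nat.factorial_ne_zero _)
    have h2 : (j.factorial : ℝ) ≠ 0 := Nat.cast_ne_zero.2 (Nat.factorial_ne_zero _)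
    have h3 : ((k - j).factorial : ℝ) ≠ 0 := Nat.cast_ne_zero.2 (Nat.factorial_ne_zero _)
    have h4 : (k.factorial : ℝ) ≠ 0 := Nat.cast_ne_zero.2 (Nat.factorial_ne_zero _)
    rw [f1]
    field_simp
    rw [f2]
    ring
  rw [Finset.sum_congr rfl hterm, ← Finset.mul_sum, key k n hnk]
  rcases eq_or_lt_of_le hnk with h | h
  · subst h
    rw [if_neg (lt_irrefl _), if_pos rfl, mul_one,
      div_self (Nat.cast_ne_zero.2 (Nat.factorial_ne_zero _))]
  · rw [if_pos h, if_neg (by omega), mul_zero]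
end

section
/- For any nonnegative integers k ≥ 1 and n ≤ k, the sum S₂ = Σ_{j=0}^{k} (-1)^j j (2k-j)! / ((2k-j-n)! · j! · (k-j)!) equals 0 if n < k-1, equals -1 if n = k-1, and equals -k² if n = k. -/
open Finset
open Polynomial

lemma polyP (m M : ℕ) (h : m ≤ M) :
    ∑ i ∈ range (m+1), ((-1:ℤ)^i * m.choose i) • ((1+X:ℤ[X])^(M-i))
      = (1+X)^(M-m) * X^m := by
  have key : ∀ i ∈ range (m+1), ((-1:ℤ)^i * m.choose i) • ((1+X:ℤ[X])^(M-i))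
      = (1+X)^(M-m) * (((-1:ℤ)^i * m.choose i) • ((1+X:ℤ[X])^(m-i))) := by
    intro i hi
    rw [mem_range] at hi
    have : M - i = (M - m) + (m - i) := by omega
    rw [this, pow_add, mul_smul_comm]
  rw [sum_congr rfl key, ← mul_sum]
  congr 1
  have := sub_pow (1+X : ℤ[X]) 1 m
  rw [add_sub_cancel_left] at this
  rw [this, ← Finset.sum_range_reflect]
  apply sum_congr rfl
  intro i hi
  rw [mem_range] at hi
  have h2 : ((-1:ℤ[X])) ^ (i + m) = (-1) ^ (m + 1 - 1 - i) := by
    have : i + m = (m + 1 - 1 - i) + 2*i := by omega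
    rw [this, pow_add, pow_mul]; simp
  have h3 : m + 1 - 1 - i = m - i := by omega
  rw [h2, h3, Nat.choose_symm (show i ≤ m by omega)]
  have h4 : m - (m - i) = i := by omega
  rw [h4]
  rw [Polynomial.smul_eq_C_mul]
  simp only [map_mul, map_pow, map_neg, map_one, map_natCast]
  ring

lemma keyC (m M n : ℕ) (h : m ≤ M) :
    ∑ i ∈ range (m+1), (-1:ℤ)^i * m.choose i * ((M-i).choose n)
      = if m ≤ n then ((M-m).choose (n-m) : ℤ) else 0 := by
  have := congrArg (fun p : ℤ[X] => p.coeff n) (polyP m M h)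
  simp only [finset_sum_coeff, coeff_smul, coeff_one_add_X_pow, coeff_mul_X_pow',
    smul_eq_mul] at this
  rw [← this]

lemma keyT (k n : ℕ) (hk : 1 ≤ k) :
    ∑ j ∈ range (k+1), (-1:ℤ)^j * j * (k.choose j) * ((2*k - j).choose n)
      = -(k:ℤ) * (if k - 1 ≤ n then (k.choose (n - (k-1)) : ℤ) else 0) := by
  rw [Finset.sum_range_succ']
  simp only [Nat.cast_zero, mul_zero, zero_mul, add_zero]
  have step : ∀ i ∈ range k, (-1:ℤ)^(i+1) * ((i+1 : ℕ) : ℤ) * (k.choose (i+1)) * ((2*k - (i+1)).choose n)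
      = -(k:ℤ) * ((-1)^i * ((k-1).choose i) * (((2*k-1) - i).choose n)) := by
    intro i hi
    have hm : 2*k - (i+1) = (2*k-1) - i := by omega
    have hc : (k:ℤ) * ((k-1).choose i) = ((i:ℤ)+1) * (k.choose (i+1)) := by
      have := Nat.add_one_mul_choose_eq (k-1) i
      have hk1 : k - 1 + 1 = k := by omega
      rw [hk1] at this
      have := congrArg (Nat.cast : ℕ → ℤ) this
      push_cast at this
      linarith [this]
    rw [hm, pow_succ]
    push_cast
    linear_combination ((-1:ℤ)^i * (((2*k-1) - i).choose n : ℤ)) * hc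
  rw [Finset.sum_congr rfl step, ← Finset.mul_sum]
  congr 1
  have hk' : k - 1 + 1 = k := by omega
  have hC := keyC (k-1) (2*k-1) n (by omega)
  rw [hk'] at hC
  rw [hC]
  have h2 : 2*k - 1 - (k-1) = k := by omega
  rw [h2]

theorem stmt1 (k n : ℕ) (hk : 1 ≤ k) (hnk : n ≤ k) :
    ∑ j ∈ Finset.range (k + 1),
      (-1 : ℝ) ^ j * (j : ℝ) * (Nat.factorial (2 * k - j)) /
        ((Nat.factorial (2 * k - j - n)) * (Nat.factorial j) * (Nat.factorial (k - j)))
      = if n < k - 1 then 0 else if n = k - 1 then -1 else -(k : ℝ) ^ 2 := by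
  have hterm : ∀ j ∈ range (k+1),
      (-1 : ℝ) ^ j * (j : ℝ) * (Nat.factorial (2 * k - j)) /
        ((Nat.factorial (2 * k - j - n)) * (Nat.factorial j) * (Nat.factorial (k - j)))
      = ((Nat.factorial n : ℝ) / (Nat.factorial k)) *
        (((-1:ℤ)^j * j * (k.choose j) * ((2*k - j).choose n) : ℤ) : ℝ) := by
    intro j hj
    rw [mem_range] at hj
    have hjk : j ≤ k := by omega
    have hn2 : n ≤ 2*k - j := by omega
    have e1 := Nat.choose_mul_factorial_mul_factorial hn2
    have e2 := Nat.choose_mul_factorial_mul_factorial hjk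
    have e1' : (((2*k-j).choose n : ℝ)) * (Nat.factorial n) * (Nat.factorial (2*k-j-n))
        = Nat.factorial (2*k-j) := by exact_mod_cast congrArg (Nat.cast (R := ℝ)) e1
    have e2' : ((k.choose j : ℝ)) * (Nat.factorial j) * (Nat.factorial (k-j))
        = Nat.factorial k := by exact_mod_cast congrArg (Nat.cast (R := ℝ)) e2
    have f1 : (Nat.factorial (2*k-j-n) : ℝ) ≠ 0 := by positivity
    have f2 : (Nat.factorial j : ℝ) ≠ 0 := by positivity
    have f3 : (Nat.factorial (k-j) : ℝ) ≠ 0 := by positivity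
    have f4 : (Nat.factorial k : ℝ) ≠ 0 := by positivity
    have f5 : ((k.choose j : ℕ) : ℝ) ≠ 0 := by
      exact_mod_cast Nat.cast_ne_zero.mpr (Nat.choose_pos hjk).ne'
    rw [← e1', ← e2']
    push_cast
    field_simp
  rw [Finset.sum_congr rfl hterm, ← Finset.mul_sum, ← Int.cast_sum, keyT k n hk]
  rcases lt_trichotomy n (k-1) with h | h | h
  · rw [show (if k - 1 ≤ n then ((k.choose (n-(k-1))):ℤ) else 0) = 0 from if_neg (by omega),
      if_pos h]
    norm_num
  · rw [show (if k - 1 ≤ n then ((k.choose (n-(k-1))):ℤ) else 0) = 1 by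
      rw [if_pos (by omega), show n-(k-1) = 0 by omega, Nat.choose_zero_right]; norm_num,
      if_neg (by omega), if_pos h]
    have hkf : (Nat.factorial k : ℝ) = k * Nat.factorial n := by
      have : k = n + 1 := by omega
      rw [this, Nat.factorial_succ]; push_cast; ring
    rw [hkf]
    have f1 : (Nat.factorial n : ℝ) ≠ 0 := by positivity
    have f2 : (k : ℝ) ≠ 0 := by positivity
    push_cast
    field_simp
  · have hnk' : n = k := by omega
    subst hnk'
    rw [show (if n - 1 ≤ n then ((n.choose (n-(n-1))):ℤ) else 0) = (n : ℤ) by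
      rw [if_pos (by omega), show n-(n-1) = 1 by omega, Nat.choose_one_right],
      if_neg (by omega), if_neg (by omega)]
    have f4 : (Nat.factorial n : ℝ) ≠ 0 := by positivity
    push_cast
    field_simp
end

section
/- For integers k ≥ 1 and 0 ≤ n ≤ k, the sum Σ_{j=0}^{k} (-1)^j (n-j) (2k-j)! / ((2k-j-n)! · j! · (k-j)!) equals 0 if n < k-1, equals 1 if n = k-1, and equals k(k+1) if n = k. -/
open Finset

lemma keyA (k : ℕ) : ∀ m n : ℕ, k ≤ m →
    ∑ j ∈ Finset.range (k+1), (-1:ℤ)^j * (k.choose j) * ((m-j).choose n)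
      = if k ≤ n then (((m-k).choose (n-k) : ℤ)) else 0 := by
  induction k with
  | zero => intro m n _; simp
  | succ k ih =>
    intro m n hm
    have hm1 : k ≤ m - 1 := by omega
    have e1 : ∑ j ∈ Finset.range (k+1+1), (-1:ℤ)^j * ((k+1).choose j) * ((m-j).choose n)
        = (∑ j ∈ Finset.range (k+1), (-1:ℤ)^j * (k.choose j) * ((m-j).choose n))
          - (∑ j ∈ Finset.range (k+1), (-1:ℤ)^j * (k.choose j) * (((m-1)-j).choose n)) := by
      rw [Finset.sum_range_succ' (fun j => (-1:ℤ)^j * ((k+1).choose j) * ((m-j).choose n)) (k+1)]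
      have step : ∀ i ∈ Finset.range (k+1),
          (-1:ℤ)^(i+1) * ((k+1).choose (i+1)) * ((m-(i+1)).choose n)
            = ((-1:ℤ)^(i+1) * (k.choose (i+1)) * ((m-(i+1)).choose n))
              + (-((-1:ℤ)^i * (k.choose i) * (((m-1)-i).choose n))) := by
        intro i _
        have : m - (i+1) = (m-1) - i := by omega
        rw [this, Nat.choose_succ_succ]
        push_cast
        ring
      rw [Finset.sum_congr rfl step, Finset.sum_add_distrib]
      have this2 := (Finset.sum_range_succ' (fun j => (-1:ℤ)^j * (k.choose j) * ((m-j).choose n)) (k+1)).symm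
      rw [Finset.sum_range_succ (fun j => (-1:ℤ)^j * (k.choose j) * ((m-j).choose n)) (k+1)] at this2
      simp only [Nat.choose_succ_self, Nat.cast_zero, mul_zero, zero_mul, add_zero,
        Nat.choose_zero_right, Nat.cast_one, pow_zero, one_mul, Nat.sub_zero] at this2 ⊢
      rw [Finset.sum_neg_distrib, ← this2]
      ring
    rw [e1, ih m n (by omega), ih (m-1) n hm1]
    by_cases h1 : k + 1 ≤ n
    · have hkn : k ≤ n := by omega
      rw [if_pos hkn, if_pos hkn, if_pos h1]
      have h2 : m - k = (m - (k+1)) + 1 := by omega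
      have h3 : n - k = (n - (k+1)) + 1 := by omega
      have h4 : m - 1 - k = m - (k+1) := by omega
      rw [h2, h3, h4, Nat.choose_succ_succ]
      push_cast
      ring
    · by_cases h2 : k ≤ n
      · have hnk : n = k := by omega
        rw [if_pos h2, if_pos h2, if_neg h1]
        have : n - k = 0 := by omega
        rw [this]
        simp
      · rw [if_neg h2, if_neg h2, if_neg h1]; ring

lemma keyB (k n : ℕ) (hk : 1 ≤ k) :
    ∑ j ∈ Finset.range (k+1), (-1:ℤ)^j * (j:ℤ) * (k.choose j) * ((2*k-j).choose n)
      = -(k:ℤ) * (if k-1 ≤ n then ((k.choose (n-(k-1))) : ℤ) else 0) := by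
  obtain ⟨p, rfl⟩ : ∃ p, k = p + 1 := ⟨k - 1, by omega⟩
  rw [Finset.sum_range_succ' (fun j => (-1:ℤ)^j * (j:ℤ) * ((p+1).choose j) * ((2*(p+1)-j).choose n)) (p+1)]
  have step : ∀ i ∈ Finset.range (p+1),
      (-1:ℤ)^(i+1) * ((i:ℤ)+1) * ((p+1).choose (i+1)) * ((2*(p+1)-(i+1)).choose n)
        = -((p:ℤ)+1) * ((-1:ℤ)^i * (p.choose i) * (((2*(p+1)-1)-i).choose n)) := by
    intro i hi
    have h1 : 2*(p+1) - (i+1) = (2*(p+1)-1) - i := by omega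
    have h2 : (i+1) * ((p+1).choose (i+1)) = (p+1) * (p.choose i) := by
      simpa [Nat.succ_eq_add_one, mul_comm] using (Nat.add_one_mul_choose_eq p i).symm
    have h2' : ((i:ℤ)+1) * ((p+1).choose (i+1)) = ((p:ℤ)+1) * (p.choose i) := by
      exact_mod_cast congrArg (Nat.cast : ℕ → ℤ) h2
    rw [h1]
    calc (-1:ℤ)^(i+1) * ((i:ℤ)+1) * ((p+1).choose (i+1)) * ((2*(p+1)-1-i).choose n)
        = (-1:ℤ)^(i+1) * (((i:ℤ)+1) * ((p+1).choose (i+1))) * ((2*(p+1)-1-i).choose n) := by ring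
      _ = (-1:ℤ)^(i+1) * (((p:ℤ)+1) * (p.choose i)) * ((2*(p+1)-1-i).choose n) := by rw [h2']
      _ = -((p:ℤ)+1) * ((-1:ℤ)^i * (p.choose i) * ((2*(p+1)-1-i).choose n)) := by
          rw [pow_succ]; ring
  have step' : ∀ i ∈ Finset.range (p+1),
      (fun (j:ℕ) => (-1:ℤ)^j * (j:ℤ) * ((p+1).choose j) * ((2*(p+1)-j).choose n)) (i+1)
        = -((p:ℤ)+1) * ((-1:ℤ)^i * (p.choose i) * (((2*(p+1)-1)-i).choose n)) := by
    intro i hi; exact_mod_cast step i hi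
  rw [Finset.sum_congr rfl step', ← Finset.mul_sum]
  have hA := keyA p (2*(p+1)-1) n (by omega)
  have h3 : 2*(p+1)-1 - p = p + 1 := by omega
  rw [h3] at hA
  rw [hA]
  have h4 : p + 1 - 1 = p := by omega
  rw [h4]
  simp

theorem stmt2 (k n : ℕ) (hk : 1 ≤ k) (hnk : n ≤ k) :
    ∑ j ∈ Finset.range (k + 1),
      (-1 : ℝ) ^ j * ((n : ℝ) - (j : ℝ)) * (Nat.factorial (2 * k - j)) /
        ((Nat.factorial (2 * k - j - n)) * (Nat.factorial j) * (Nat.factorial (k - j)))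
      = if n < k - 1 then 0 else if n = k - 1 then 1 else (k : ℝ) * (k + 1) := by
  have hterm : ∀ j ∈ Finset.range (k+1),
      (-1 : ℝ) ^ j * ((n : ℝ) - (j : ℝ)) * (Nat.factorial (2 * k - j)) /
        ((Nat.factorial (2 * k - j - n)) * (Nat.factorial j) * (Nat.factorial (k - j)))
      = ((n.factorial : ℝ) / (k.factorial : ℝ)) *
          ((-1:ℝ)^j * ((n:ℝ) - j) * ((k.choose j : ℝ)) * (((2*k-j).choose n : ℝ))) := by
    intro j hj
    simp only [Finset.mem_range] at hj
    have hjk : j ≤ k := by omega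
    have hn2 : n ≤ 2*k - j := by omega
    have natid : Nat.factorial (2*k-j) * Nat.factorial k
        = ((2*k-j).choose n * n.factorial * (2*k-j-n).factorial)
          * (k.choose j * j.factorial * (k-j).factorial) := by
      rw [Nat.choose_mul_factorial_mul_factorial hn2, Nat.choose_mul_factorial_mul_factorial hjk]
    have R : ((2*k-j).factorial : ℝ) * (k.factorial : ℝ)
        = (((2*k-j).choose n : ℝ) * (n.factorial : ℝ) * ((2*k-j-n).factorial : ℝ))
          * ((k.choose j : ℝ) * (j.factorial : ℝ) * ((k-j).factorial : ℝ)) := by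
      exact_mod_cast congrArg (Nat.cast : ℕ → ℝ) natid
    have hb : ((Nat.factorial (2*k-j-n) : ℝ) * (Nat.factorial j) * (Nat.factorial (k-j))) ≠ 0 := by
      positivity
    have hd : (k.factorial : ℝ) ≠ 0 := by positivity
    rw [div_mul_eq_mul_div, div_eq_div_iff hb hd]
    linear_combination ((-1:ℝ)^j * ((n:ℝ) - j)) * R
  rw [Finset.sum_congr rfl hterm, ← Finset.mul_sum]
  have hsplit : ∀ j ∈ Finset.range (k+1),
      (-1:ℤ)^j * ((n:ℤ) - j) * (k.choose j) * ((2*k-j).choose n)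
        = (n:ℤ) * ((-1:ℤ)^j * (k.choose j) * ((2*k-j).choose n))
          - ((-1:ℤ)^j * (j:ℤ) * (k.choose j) * ((2*k-j).choose n)) := by
    intro j _; ring
  have hT : ∑ j ∈ Finset.range (k+1),
      (-1:ℤ)^j * ((n:ℤ) - j) * (k.choose j) * ((2*k-j).choose n)
      = (n:ℤ) * (if k ≤ n then ((2*k-k).choose (n-k) : ℤ) else 0)
        + (k:ℤ) * (if k-1 ≤ n then ((k.choose (n-(k-1))) : ℤ) else 0) := by
    rw [Finset.sum_congr rfl hsplit, Finset.sum_sub_distrib, ← Finset.mul_sum,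
      keyA k (2*k) n (by omega), keyB k n hk]
    ring
  have hcast : ∑ j ∈ Finset.range (k+1),
      ((-1:ℝ)^j * ((n:ℝ) - j) * ((k.choose j : ℝ)) * (((2*k-j).choose n : ℝ)))
      = ((∑ j ∈ Finset.range (k+1),
          (-1:ℤ)^j * ((n:ℤ) - j) * (k.choose j) * ((2*k-j).choose n) : ℤ) : ℝ) := by
    push_cast; rfl
  rw [hcast, hT]
  by_cases h1 : n = k
  · subst h1
    rw [if_pos le_rfl, if_pos (by omega)]
    have e1 : 2*n - n = n := by omega
    have e2 : n - n = 0 := by omega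
    have e3 : n - (n-1) = 1 := by omega
    rw [e1, e2, e3, Nat.choose_zero_right, Nat.choose_one_right]
    rw [if_neg (by omega), if_neg (by omega)]
    push_cast
    field_simp
    ring
  · by_cases h2 : n = k - 1
    · rw [if_neg (by omega), if_pos (by omega)]
      have e3 : n - (k-1) = 0 := by omega
      rw [e3, Nat.choose_zero_right]
      rw [if_neg (by omega), if_pos h2]
      have hfac : (k.factorial : ℝ) = (k:ℝ) * (n.factorial : ℝ) := by
        have : k * n.factorial = k.factorial := by
          rw [h2]; exact Nat.mul_factorial_pred (by omega)
        exact_mod_cast (congrArg (Nat.cast : ℕ → ℝ) this).symm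
      push_cast
      rw [hfac]
      have hk0 : (k:ℝ) ≠ 0 := by positivity
      have hn0 : (n.factorial : ℝ) ≠ 0 := by positivity
      field_simp
      ring
    · rw [if_neg (by omega), if_neg (by omega), if_pos (by omega)]
      norm_num
end

section
/- For all integers k and i with 0 < i < k, the sum Σ_{n=0}^{k} (-1)^n · n/(2k-n) · C(k,n) · C(2k-n, 2i) · (-n-2i)_k equals 0, where (x)_k = x(x+1)···(x+k-1) is the Pochhammer (rising factorial) symbol. -/
open Finset

-- trinomial: C(N,r) C(N-r,s) = C(N,s) C(N-s,r)
lemma aux_choose_comm (N r s : ℕ) :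
    N.choose r * (N - r).choose s = N.choose s * (N - s).choose r := by
  by_cases h : r + s ≤ N
  · have h1 := Nat.choose_mul (n := N) (k := r + s) (s := r) (Nat.le_add_right _ _)
    have h2 := Nat.choose_mul (n := N) (k := r + s) (s := s) (Nat.le_add_left _ _)
    rw [Nat.add_sub_cancel_left] at h1
    rw [Nat.add_sub_cancel] at h2
    rw [Nat.choose_symm_add] at h1
    omega
  · push_neg at h
    have hz : ∀ a b : ℕ, N < a + b → N.choose a * (N - a).choose b = 0 := by
      intro a b hab
      rcases le_or_gt a N with ha | ha
      · have : N - a < b := by omega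
        rw [Nat.choose_eq_zero_of_lt this, Nat.mul_zero]
      · rw [Nat.choose_eq_zero_of_lt ha, Nat.zero_mul]
    rw [hz r s h, hz s r (by omega)]

lemma L1 (N s : ℕ) :
    ∑ r ∈ range (N + 1), (-1 : ℤ) ^ r * N.choose r * (N - r).choose s
      = if s = N then 1 else 0 := by
  have hrw : ∀ r ∈ range (N + 1),
      (-1 : ℤ) ^ r * N.choose r * (N - r).choose s
        = (N.choose s : ℤ) * ((-1) ^ r * (N - s).choose r) := by
    intro r _
    have h2 : (N.choose r : ℤ) * ((N - r).choose s : ℤ)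
        = (N.choose s : ℤ) * ((N - s).choose r : ℤ) := by
      exact_mod_cast aux_choose_comm N r s
    rw [mul_assoc, h2]; ring
  rw [Finset.sum_congr rfl hrw, ← Finset.mul_sum]
  rcases lt_trichotomy s N with h | h | h
  · have hsub : Finset.range (N - s + 1) ⊆ Finset.range (N + 1) := by
      apply Finset.range_subset_range.mpr; omega
    rw [← Finset.sum_subset hsub (by
      intro x _ hx
      simp only [Finset.mem_range, not_lt] at hx
      rw [Nat.choose_eq_zero_of_lt (by omega), Nat.cast_zero, mul_zero])]
    rw [Int.alternating_sum_range_choose]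
    rw [if_neg (by omega), mul_zero, if_neg (by omega)]
  · subst h
    rw [if_pos rfl, Nat.choose_self, Nat.cast_one, one_mul]
    rw [Finset.sum_eq_single 0]
    · simp
    · intro b _ hb
      rw [Nat.sub_self, Nat.choose_eq_zero_of_lt (by omega), Nat.cast_zero, mul_zero]
    · simp
  · rw [Nat.choose_eq_zero_of_lt h, Nat.cast_zero, zero_mul, if_neg (by omega)]

lemma L2 (K s u : ℕ) :
    ∑ m ∈ range (K + 1), (-1 : ℤ) ^ m * K.choose m * (K - m).choose s * m.choose u
      = if s + u = K then (-1 : ℤ) ^ u * K.choose u else 0 := by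
  rcases le_or_gt u K with hu | hu
  · -- rewrite terms with indicator
    have hrw : ∀ m ∈ range (K + 1),
        (-1 : ℤ) ^ m * K.choose m * (K - m).choose s * m.choose u
          = if u ≤ m then (-1 : ℤ) ^ m * K.choose u * (K - u).choose (m - u)
              * (K - m).choose s else 0 := by
      intro m hm
      simp only [Finset.mem_range] at hm
      by_cases hum : u ≤ m
      · rw [if_pos hum]
        have h2 : (K.choose m : ℤ) * m.choose u
            = (K.choose u : ℤ) * (K - u).choose (m - u) := by
          exact_mod_cast Nat.choose_mul hum
        calc (-1 : ℤ) ^ m * K.choose m * (K - m).choose s * m.choose u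
            = (-1 : ℤ) ^ m * ((K.choose m : ℤ) * m.choose u) * (K - m).choose s := by ring
          _ = _ := by rw [h2]; ring
      · rw [if_neg hum, Nat.choose_eq_zero_of_lt (show m < u by omega), Nat.cast_zero, mul_zero]
    rw [Finset.sum_congr rfl hrw]
    rw [Finset.range_eq_Ico, ← Finset.sum_Ico_consecutive _ (Nat.zero_le u) (by omega : u ≤ K + 1)]
    have h0 : ∑ m ∈ Finset.Ico 0 u, (if u ≤ m then (-1 : ℤ) ^ m * K.choose u
        * (K - u).choose (m - u) * (K - m).choose s else 0) = 0 := by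
      apply Finset.sum_eq_zero
      intro m hm
      simp only [Finset.mem_Ico] at hm
      rw [if_neg (by omega)]
    rw [h0, zero_add, Finset.sum_Ico_eq_sum_range]
    have h1 : ∀ r ∈ range (K + 1 - u),
        (if u ≤ u + r then (-1 : ℤ) ^ (u + r) * K.choose u
            * (K - u).choose (u + r - u) * (K - (u + r)).choose s else 0)
          = ((-1) ^ u * K.choose u) * ((-1 : ℤ) ^ r * (K - u).choose r * (K - u - r).choose s) := by
      intro r _
      rw [if_pos (Nat.le_add_right _ _), Nat.add_sub_cancel_left,
        show K - (u + r) = K - u - r by omega, pow_add]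
      ring
    rw [Finset.sum_congr rfl h1, ← Finset.mul_sum,
      show K + 1 - u = (K - u) + 1 by omega, L1]
    by_cases hc : s = K - u
    · rw [if_pos hc, if_pos (by omega), mul_one]
    · rw [if_neg hc, if_neg (by omega), mul_zero]
  · rw [if_neg (by omega)]
    apply Finset.sum_eq_zero
    intro m hm
    simp only [Finset.mem_range] at hm
    rw [Nat.choose_eq_zero_of_lt (show m < u by omega), Nat.cast_zero, mul_zero]

lemma sum_invol_aux (N c : ℕ) (f : ℕ → ℤ)
    (hc : ∀ t, t ∈ range N → f t ≠ 0 →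
      (c - t ∈ range N ∧ f (c - t) = -f t ∧ t ≤ c ∧ c - t ≠ t)) :
    ∑ t ∈ range N, f t = 0 := by
  apply Finset.sum_involution (g := fun t _ => if f t = 0 then t else c - t)
  · intro a ha
    by_cases h : f a = 0
    · rw [if_pos h, h, add_zero]
    · rw [if_neg h, (hc a ha h).2.1]; ring
  · intro a ha h
    rw [if_neg h]
    exact (hc a ha h).2.2.2
  · intro a ha
    by_cases h : f a = 0
    · rwa [if_pos h]
    · rw [if_neg h]
      exact (hc a ha h).1
  · intro a ha
    by_cases h : f a = 0
    · simp [h]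
    · have hk := hc a ha h
      rw [if_neg h]
      have h2 : f (c - a) ≠ 0 := by rw [hk.2.1]; simpa using h
      rw [if_neg h2]
      omega

lemma finalsum (k i : ℕ) (hi : 0 < i) (hik : i < k) :
    ∑ t ∈ range (k + 1), ((2 * i + 1).choose t : ℤ) *
      (if 1 ≤ t ∧ t ≤ 2 * i then
        ((k - 1).choose (2 * i - t) : ℤ) * ((-1 : ℤ) ^ (k - t) * ((k - 1).choose (k - t) : ℤ))
      else 0) = 0 := by
  apply sum_invol_aux (c := 2 * i + 1)
  intro t ht hft
  simp only [Finset.mem_range] at ht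
  have htk : t ≤ k := by omega
  have hcond : 1 ≤ t ∧ t ≤ 2 * i := by
    by_contra hc
    exact hft (by rw [if_neg hc, mul_zero])
  have hmid : 2 * i - t ≤ k - 1 := by
    by_contra hc
    push_neg at hc
    exact hft (by
      rw [if_pos hcond, Nat.choose_eq_zero_of_lt hc, Nat.cast_zero, zero_mul, mul_zero])
  have ht'k : 2 * i + 1 - t ≤ k := by omega
  have ht'1 : 1 ≤ 2 * i + 1 - t ∧ 2 * i + 1 - t ≤ 2 * i := by omega
  have e1 : (2 * i + 1).choose (2 * i + 1 - t) = (2 * i + 1).choose t :=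
    Nat.choose_symm (by omega)
  have e2 : (k - 1).choose (2 * i - (2 * i + 1 - t)) = (k - 1).choose (k - t) := by
    rw [show 2 * i - (2 * i + 1 - t) = (k - 1) - (k - t) by omega]
    exact Nat.choose_symm (by omega)
  have e3 : (k - 1).choose (k - (2 * i + 1 - t)) = (k - 1).choose (2 * i - t) := by
    rw [show k - (2 * i + 1 - t) = (k - 1) - (2 * i - t) by omega]
    exact Nat.choose_symm hmid
  have esign : (-1 : ℤ) ^ (k - (2 * i + 1 - t)) = -(-1 : ℤ) ^ (k - t) := by
    have h1 : (-1 : ℤ) ^ (k - (2 * i + 1 - t)) * (-1 : ℤ) ^ (k - t) = -1 := by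
      rw [← pow_add, show (k - (2 * i + 1 - t)) + (k - t) = 2 * (k - i) - 1 by omega]
      exact Odd.neg_one_pow ⟨k - i - 1, by omega⟩
    have h2 : (-1 : ℤ) ^ (k - t) * (-1 : ℤ) ^ (k - t) = 1 := by
      rw [← pow_add]; exact Even.neg_one_pow ⟨k - t, rfl⟩
    calc (-1 : ℤ) ^ (k - (2 * i + 1 - t))
        = (-1 : ℤ) ^ (k - (2 * i + 1 - t)) * ((-1 : ℤ) ^ (k - t) * (-1 : ℤ) ^ (k - t)) := by
          rw [h2, mul_one]
      _ = ((-1 : ℤ) ^ (k - (2 * i + 1 - t)) * (-1 : ℤ) ^ (k - t)) * (-1 : ℤ) ^ (k - t) := by ring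
      _ = -(-1 : ℤ) ^ (k - t) := by rw [h1]; ring
  refine ⟨Finset.mem_range.mpr (by omega), ?_, by omega, by omega⟩
  rw [if_pos ht'1, if_pos hcond, e1, e2, e3, esign]
  ring

lemma keyA_s4 (k i : ℕ) (hi : 0 < i) (hik : i < k) :
    ∑ m ∈ range k, (-1 : ℤ) ^ m * ((k - 1).choose m) * ((2 * k - 2 - m).choose (2 * i - 1))
      * ((m + 2 * i + 1).choose k) = 0 := by
  have hrange : range k = range ((k - 1) + 1) := by rw [show (k - 1) + 1 = k by omega]
  have step1 : ∀ m ∈ range k,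
      (-1 : ℤ) ^ m * ((k - 1).choose m) * ((2 * k - 2 - m).choose (2 * i - 1))
        * ((m + 2 * i + 1).choose k)
      = ∑ s ∈ range (2 * i), ∑ t ∈ range (k + 1),
          ((k - 1).choose s : ℤ) * ((2 * i + 1).choose t : ℤ) *
            ((-1 : ℤ) ^ m * ((k - 1).choose m : ℤ) * ((k - 1 - m).choose (2 * i - 1 - s) : ℤ)
              * (m.choose (k - t) : ℤ)) := by
    intro m hm
    simp only [Finset.mem_range] at hm
    have c1 : (2 * k - 2 - m).choose (2 * i - 1)
        = ∑ s ∈ range (2 * i), (k - 1).choose s * (k - 1 - m).choose (2 * i - 1 - s) := by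
      rw [show 2 * k - 2 - m = (k - 1) + (k - 1 - m) by omega, Nat.add_choose_eq,
        Finset.Nat.sum_antidiagonal_eq_sum_range_succ_mk]
      simp [Nat.succ_eq_add_one, show 2 * i - 1 + 1 = 2 * i by omega]
    have c2 : (m + 2 * i + 1).choose k
        = ∑ t ∈ range (k + 1), (2 * i + 1).choose t * m.choose (k - t) := by
      rw [show m + 2 * i + 1 = (2 * i + 1) + m by omega, Nat.add_choose_eq,
        Finset.Nat.sum_antidiagonal_eq_sum_range_succ_mk]
    rw [c1, c2]
    push_cast
    rw [Finset.sum_comm, Finset.mul_sum]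
    apply Finset.sum_congr rfl
    intro t _
    rw [Finset.mul_sum, Finset.sum_mul]
    apply Finset.sum_congr rfl
    intro s _
    ring
  rw [Finset.sum_congr rfl step1, Finset.sum_comm]
  have step2 : ∀ s ∈ range (2 * i),
      ∑ m ∈ range k, ∑ t ∈ range (k + 1),
          ((k - 1).choose s : ℤ) * ((2 * i + 1).choose t : ℤ) *
            ((-1 : ℤ) ^ m * ((k - 1).choose m : ℤ) * ((k - 1 - m).choose (2 * i - 1 - s) : ℤ)
              * (m.choose (k - t) : ℤ))
      = ∑ t ∈ range (k + 1),
          ((k - 1).choose s : ℤ) * ((2 * i + 1).choose t : ℤ) *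
            (if (2 * i - 1 - s) + (k - t) = k - 1 then
              (-1 : ℤ) ^ (k - t) * ((k - 1).choose (k - t) : ℤ) else 0) := by
    intro s _
    rw [Finset.sum_comm]
    apply Finset.sum_congr rfl
    intro t _
    rw [← Finset.mul_sum, hrange, L2]
  rw [Finset.sum_congr rfl step2, Finset.sum_comm]
  have step3 : ∀ t ∈ range (k + 1),
      ∑ s ∈ range (2 * i),
          ((k - 1).choose s : ℤ) * ((2 * i + 1).choose t : ℤ) *
            (if (2 * i - 1 - s) + (k - t) = k - 1 then
              (-1 : ℤ) ^ (k - t) * ((k - 1).choose (k - t) : ℤ) else 0)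
      = ((2 * i + 1).choose t : ℤ) *
          (if 1 ≤ t ∧ t ≤ 2 * i then
            ((k - 1).choose (2 * i - t) : ℤ) * ((-1 : ℤ) ^ (k - t) * ((k - 1).choose (k - t) : ℤ))
          else 0) := by
    intro t ht
    simp only [Finset.mem_range] at ht
    by_cases hc : 1 ≤ t ∧ t ≤ 2 * i
    · rw [if_pos hc, Finset.sum_eq_single (2 * i - t)]
      · rw [if_pos (by omega)]
        ring
      · intro s hs hne
        simp only [Finset.mem_range] at hs
        rw [if_neg (by omega), mul_zero]
      · intro hnm
        exact absurd (Finset.mem_range.mpr (by omega)) hnm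
    · rw [if_neg hc, mul_zero]
      apply Finset.sum_eq_zero
      intro s hs
      simp only [Finset.mem_range] at hs
      rw [if_neg (by omega), mul_zero]
  rw [Finset.sum_congr rfl step3]
  exact finalsum k i hi hik

theorem stmt4 (k i : ℕ) (hi : 0 < i) (hik : i < k) :
    ∑ n ∈ Finset.range (k + 1),
      (-1 : ℝ) ^ n * (n : ℝ) / ((2 * k : ℝ) - n) * (Nat.choose k n)
        * (Nat.choose (2 * k - n) (2 * i))
        * (Polynomial.eval (-(n : ℝ) - 2 * i) (ascPochhammer ℝ k))
      = 0 := by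
  have hk1 : 1 ≤ k := by omega
  rw [Finset.sum_range_succ']
  have h0 : (-1 : ℝ) ^ 0 * ((0 : ℕ) : ℝ) / ((2 * k : ℝ) - (0 : ℕ))
      * (Nat.choose k 0) * (Nat.choose (2 * k - 0) (2 * i))
      * (Polynomial.eval (-((0 : ℕ) : ℝ) - 2 * i) (ascPochhammer ℝ k)) = 0 := by
    norm_num
  rw [h0, add_zero]
  have hterm : ∀ m ∈ range k,
      (-1 : ℝ) ^ (m + 1) * ((m + 1 : ℕ) : ℝ) / ((2 * k : ℝ) - ((m + 1 : ℕ) : ℝ))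
        * (Nat.choose k (m + 1)) * (Nat.choose (2 * k - (m + 1)) (2 * i))
        * (Polynomial.eval (-((m + 1 : ℕ) : ℝ) - 2 * i) (ascPochhammer ℝ k))
      = (-(((-1 : ℝ) ^ k * (k.factorial : ℝ) * (k : ℝ)) / (2 * (i : ℝ)))) *
          (((-1 : ℤ) ^ m * ((k - 1).choose m) * ((2 * k - 2 - m).choose (2 * i - 1))
            * ((m + 2 * i + 1).choose k) : ℤ) : ℝ) := by
    intro m hm
    simp only [Finset.mem_range] at hm
    have hev : Polynomial.eval (-((m + 1 : ℕ) : ℝ) - 2 * i) (ascPochhammer ℝ k)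
        = (-1 : ℝ) ^ k * ((k.factorial : ℝ) * ((m + 2 * i + 1).choose k : ℝ)) := by
      have h1 : (-((m + 1 : ℕ) : ℝ) - 2 * i) = -(((m + 2 * i + 1 : ℕ) : ℝ)) := by
        push_cast; ring
      rw [h1, ascPochhammer_eval_neg_eq_descPochhammer,
        descPochhammer_eval_eq_descFactorial,
        Nat.descFactorial_eq_factorial_mul_choose]
      push_cast
      ring
    have hD : ((2 * k : ℝ) - ((m + 1 : ℕ) : ℝ)) = ((2 * k - (m + 1) : ℕ) : ℝ) := by
      have : (m + 1) ≤ 2 * k := by omega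
      push_cast [this]
      ring
    have hDne : ((2 * k - (m + 1) : ℕ) : ℝ) ≠ 0 := by
      rw [Nat.cast_ne_zero]; omega
    have hiR : (i : ℝ) ≠ 0 := by
      rw [Nat.cast_ne_zero]; omega
    have h2N : (m + 1) * (k.choose (m + 1)) = k * ((k - 1).choose m) := by
      have h := Nat.add_one_mul_choose_eq (k - 1) m
      rw [show k - 1 + 1 = k by omega] at h
      exact (Nat.mul_comm _ _).trans h.symm
    have h3N : (2 * i) * ((2 * k - (m + 1)).choose (2 * i))
        = (2 * k - (m + 1)) * ((2 * k - 2 - m).choose (2 * i - 1)) := by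
      have h := Nat.add_one_mul_choose_eq (2 * k - 2 - m) (2 * i - 1)
      rw [show 2 * k - 2 - m + 1 = 2 * k - (m + 1) by omega,
        show 2 * i - 1 + 1 = 2 * i by omega] at h
      exact (Nat.mul_comm _ _).trans h.symm
    have h2R : ((m + 1 : ℕ) : ℝ) * (k.choose (m + 1) : ℝ) = (k : ℝ) * ((k - 1).choose m : ℝ) := by
      exact_mod_cast congrArg (fun x : ℕ => (x : ℝ)) h2N
    have h3R : (2 * (i : ℝ)) * ((2 * k - (m + 1)).choose (2 * i) : ℝ)
        = ((2 * k - (m + 1) : ℕ) : ℝ) * ((2 * k - 2 - m).choose (2 * i - 1) : ℝ) := by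
      exact_mod_cast congrArg (fun x : ℕ => (x : ℝ)) h3N
    rw [hev, hD]
    push_cast at h2R h3R ⊢
    field_simp
    linear_combination ((-1 : ℝ) ^ (m + 1) * ((m + 2 * i + 1).choose k : ℝ) * ((2 * k - (m + 1) : ℕ) : ℝ)
        * ((2 * k - 2 - m).choose (2 * i - 1) : ℝ)) * h2R
      + ((-1 : ℝ) ^ (m + 1) * ((m + 2 * i + 1).choose k : ℝ) * ((m : ℝ) + 1)
        * (k.choose (m + 1) : ℝ)) * h3R
  rw [Finset.sum_congr rfl hterm, ← Finset.mul_sum]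
  rw [show ∑ m ∈ range k, (((-1 : ℤ) ^ m * ((k - 1).choose m)
      * ((2 * k - 2 - m).choose (2 * i - 1)) * ((m + 2 * i + 1).choose k) : ℤ) : ℝ)
    = ((∑ m ∈ range k, ((-1 : ℤ) ^ m * ((k - 1).choose m)
      * ((2 * k - 2 - m).choose (2 * i - 1)) * ((m + 2 * i + 1).choose k)) : ℤ) : ℝ) by
    push_cast; ring]
  rw [keyA_s4 k i hi hik]
  norm_num
end

section
/- For all integers k and i with 0 < i < k, the sum Σ_{n=0}^{k} (-1)^n · (2k-n-2i)/(2k-n) · C(k,n) · C(2k-n, 2i) · (-n-2i)_{k-1} equals 0, where (x)_{k-1} is the rising factorial with k-1 factors. -/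
open Finset

noncomputable def F (k i n : ℕ) : ℝ :=
  (-1) ^ n * (Nat.choose k n) * (Nat.choose (2*k-1-n) (2*i)) * (Nat.choose (n+2*i) (k-1))

lemma pairX (k i a b : ℕ) (ha : a ≤ k) (hb : b ≤ k) (hab : a + b + 2*i + 1 = 2*k) :
    ((Nat.choose k a : ℝ)) * (Nat.choose (2*k-1-a) (2*i)) * (Nat.choose (a+2*i) (k-1))
      = (Nat.choose k b) * (Nat.choose (a+2*i) (2*i)) * (Nat.choose (2*k-1-a) (k-1)) := by
  have hA : 2*k-1-a = b + 2*i := by omega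
  rw [hA]
  rw [Nat.cast_choose ℝ ha, Nat.cast_choose ℝ hb,
      Nat.cast_choose ℝ (show 2*i ≤ b+2*i by omega),
      Nat.cast_choose ℝ (show k-1 ≤ a+2*i by omega),
      Nat.cast_choose ℝ (show 2*i ≤ a+2*i by omega),
      Nat.cast_choose ℝ (show k-1 ≤ b+2*i by omega)]
  have e1 : b + 2*i - 2*i = b := by omega
  have e2 : a + 2*i - 2*i = a := by omega
  have e3 : a + 2*i - (k-1) = k - b := by omega
  have e4 : b + 2*i - (k-1) = k - a := by omega
  rw [e1, e2, e3, e4]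
  ring

lemma pair_sum (k i a b : ℕ) (hi : 0 < i) (hik : i < k) (ha : a ≤ k) (hb : b ≤ k)
    (hab : a + b + 2*i + 1 = 2*k) : F k i a + F k i b = 0 := by
  have h1 : 2*k-1-b = a+2*i := by omega
  have h2 : b+2*i = 2*k-1-a := by omega
  have hsign : (-1:ℝ)^b = -((-1:ℝ)^a) := by
    rcases Nat.even_or_odd a with h | h
    · rcases h with ⟨m, hm⟩
      have hbodd : Odd b := ⟨k-i-1-m, by omega⟩
      rw [Even.neg_one_pow ⟨m, hm⟩, Odd.neg_one_pow hbodd]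
    · rcases h with ⟨m, hm⟩
      have hbeven : Even b := ⟨k-i-1-m, by omega⟩
      rw [Even.neg_one_pow hbeven, Odd.neg_one_pow ⟨m, hm⟩]; norm_num
  have hx := pairX k i a b ha hb hab
  unfold F
  rw [h1, h2, hsign]
  linear_combination ((-1:ℝ)^a) * hx

lemma suppF (k i n : ℕ) (hi : 0 < i) (h : F k i n ≠ 0) :
    2*i + n + 1 ≤ 2*k ∧ k ≤ n + 2*i + 1 := by
  have hA : Nat.choose (2*k-1-n) (2*i) ≠ 0 := by
    intro h0; apply h; unfold F; rw [h0]; push_cast; ring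
  have hB : Nat.choose (n+2*i) (k-1) ≠ 0 := by
    intro h0; apply h; unfold F; rw [h0]; push_cast; ring
  have hA' : 2*i ≤ 2*k-1-n := Nat.le_of_not_lt (fun hlt => hA (Nat.choose_eq_zero_of_lt hlt))
  have hB' : k-1 ≤ n+2*i := Nat.le_of_not_lt (fun hlt => hB (Nat.choose_eq_zero_of_lt hlt))
  omega

lemma sumF (k i : ℕ) (hi : 0 < i) (hik : i < k) :
    ∑ n ∈ Finset.range (k+1), F k i n = 0 := by
  classical
  rw [← Finset.sum_filter_ne_zero]
  refine Finset.sum_involution (fun a _ => 2*k-1-2*i-a) ?_ ?_ ?_ ?_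
  · intro a ha
    rw [Finset.mem_filter, Finset.mem_range] at ha
    obtain ⟨hs1, hs2⟩ := suppF k i a hi ha.2
    exact pair_sum k i a _ hi hik (by omega) (by omega) (by omega)
  · intro a ha hne
    rw [Finset.mem_filter, Finset.mem_range] at ha
    obtain ⟨hs1, hs2⟩ := suppF k i a hi ha.2
    omega
  · intro a ha
    rw [Finset.mem_filter, Finset.mem_range] at ha
    obtain ⟨hs1, hs2⟩ := suppF k i a hi ha.2
    rw [Finset.mem_filter, Finset.mem_range]
    constructor
    · omega
    · have := pair_sum k i a (2*k-1-2*i-a) hi hik (by omega) (by omega) (by omega)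
      intro h0
      apply ha.2
      linarith [this, h0]
  · intro a ha
    rw [Finset.mem_filter, Finset.mem_range] at ha
    obtain ⟨hs1, hs2⟩ := suppF k i a hi ha.2
    omega

lemma prefac (k i n : ℕ) (hn : n ≤ k) (hik : i < k) :
    ((2 * k : ℝ) - n - 2 * i) / ((2 * k : ℝ) - n) * (Nat.choose (2*k-n) (2*i))
      = (Nat.choose (2*k-1-n) (2*i)) := by
  have hd : (2 * k : ℝ) - n ≠ 0 := by
    have : n < 2*k := by omega
    have : (n:ℝ) < 2*k := by exact_mod_cast this
    linarith
  by_cases h2 : 2*i ≤ 2*k - n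
  · have key : Nat.choose (2*k-1-n) (2*i) * (2*k-n) = Nat.choose (2*k-n) (2*i) * (2*k-n-2*i) := by
      have h := Nat.choose_mul_succ_eq (2*k-1-n) (2*i)
      have e : 2*k-1-n+1 = 2*k-n := by omega
      rw [e] at h
      exact h
    have keyR : (Nat.choose (2*k-1-n) (2*i) : ℝ) * ((2*k:ℝ)-n)
        = (Nat.choose (2*k-n) (2*i)) * ((2*k:ℝ)-n-2*i) := by
      have := congrArg (fun x : ℕ => (x : ℝ)) key
      push_cast [Nat.cast_sub (show n ≤ 2*k by omega), Nat.cast_sub (show 2*i ≤ 2*k-n from h2),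
        Nat.cast_sub (show n ≤ 2*k by omega)] at this
      convert this using 2 <;> push_cast [Nat.cast_sub (show n ≤ 2*k by omega)] <;> ring
    field_simp
    linarith [keyR]
  · have hz1 : Nat.choose (2*k-n) (2*i) = 0 := Nat.choose_eq_zero_of_lt (by omega)
    have hz2 : Nat.choose (2*k-1-n) (2*i) = 0 := Nat.choose_eq_zero_of_lt (by omega)
    rw [hz1, hz2]
    simp

theorem stmt5 (k i : ℕ) (hi : 0 < i) (hik : i < k) :
    ∑ n ∈ Finset.range (k + 1),
      (-1 : ℝ) ^ n * ((2 * k : ℝ) - n - 2 * i) / ((2 * k : ℝ) - n) * (Nat.choose k n)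
        * (Nat.choose (2 * k - n) (2 * i))
        * (Polynomial.eval (-(n : ℝ) - 2 * i) (ascPochhammer ℝ (k - 1)))
      = 0 := by
  have hterm : ∀ n ∈ Finset.range (k+1),
      (-1 : ℝ) ^ n * ((2 * k : ℝ) - n - 2 * i) / ((2 * k : ℝ) - n) * (Nat.choose k n)
        * (Nat.choose (2 * k - n) (2 * i))
        * (Polynomial.eval (-(n : ℝ) - 2 * i) (ascPochhammer ℝ (k - 1)))
      = ((-1:ℝ)^(k-1) * (Nat.factorial (k-1))) * F k i n := by
    intro n hn
    rw [Finset.mem_range] at hn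
    have hn' : n ≤ k := by omega
    have hev : (-(n : ℝ) - 2 * i) = -(((n + 2*i : ℕ)) : ℝ) := by push_cast; ring
    rw [hev, ascPochhammer_eval_neg_eq_descPochhammer,
        descPochhammer_eval_eq_descFactorial, Nat.descFactorial_eq_factorial_mul_choose]
    have hp := prefac k i n hn' hik
    unfold F
    push_cast
    linear_combination ((-1:ℝ)^n * (-1:ℝ)^(k-1) * ((Nat.factorial (k-1)):ℝ) * ((Nat.choose k n):ℝ) * ((Nat.choose (n+2*i) (k-1)):ℝ)) * hp
  rw [Finset.sum_congr rfl hterm, ← Finset.mul_sum, sumF k i hi hik, mul_zero]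
end
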